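/- Let P be a Horn ℱ-program without constraint clauses. Then P has a largest derivable model, namely the result of the canonical P-computation with respect to the set At of all atoms; every derivable model of P is contained in it. -/
import Mathlib


/-- An abstract-constraint clause: head constraint `hdC` over head set `hset`,
positive body literals `pos` and negated body literals `neg`, each a pair
(constraint, atom set). -/
structure ACClause (At : Type*) where
  hdC : Set (Set At)
  hset : Set At
  pos : List (Set (Set At) × Set At)
  neg : List (Set (Set At) × Set At)

/-- M ⊨ C(X) iff M ∩ X ∈ C. -/
def satAtom {At : Type*} (M : Set At) (A : Set (Set At) × Set At) : Prop :=
  M ∩ A.2 ∈ A.1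

def satBody {At : Type*} (M : Set At) (r : ACClause At) : Prop :=
  (∀ A ∈ r.pos, satAtom M A) ∧ (∀ A ∈ r.neg, ¬ satAtom M A)

def satHead {At : Type*} (M : Set At) (r : ACClause At) : Prop :=
  M ∩ r.hset ∈ r.hdC

/-- A constraint is monotone (upward closed). -/
def MonoC {At : Type*} (C : Set (Set At)) : Prop :=
  ∀ A A' : Set At, A ∈ C → A ⊆ A' → A' ∈ C

def MonoClause {At : Type*} (r : ACClause At) : Prop :=
  MonoC r.hdC ∧ (∀ A ∈ r.pos, MonoC A.1) ∧ (∀ A ∈ r.neg, MonoC A.1)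

/-- All atom sets of a clause are finite. -/
def FinClause {At : Type*} (r : ACClause At) : Prop :=
  r.hset.Finite ∧ (∀ A ∈ r.pos, A.2.Finite) ∧ (∀ A ∈ r.neg, A.2.Finite)

/-- The head constraint atom of `r` is consistent. -/
def ConsHead {At : Type*} (r : ACClause At) : Prop :=
  ∃ M : Set At, satHead M r

def Models {At : Type*} (M : Set At) (P : Set (ACClause At)) : Prop :=
  ∀ r ∈ P, satBody M r → satHead M r

/-- The M-applicable clauses P(M). -/
def appl {At : Type*} (P : Set (ACClause At)) (M : Set At) : Set (ACClause At) :=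
  {r ∈ P | satBody M r}

/-- hset(P(M)): union of head sets of M-applicable clauses. -/
def hsetP {At : Type*} (P : Set (ACClause At)) (M : Set At) : Set At :=
  ⋃ r ∈ appl P M, r.hset

/-- The nondeterministic one-step provability operator. -/
def Tnd {At : Type*} (P : Set (ACClause At)) (M : Set At) : Set (Set At) :=
  {M' | M' ⊆ hsetP P M ∧ ∀ r ∈ appl P M, satHead M' r}

/-- A monotone ℱ-program: all constraints monotone, all atom sets finite. -/
def MonoProg {At : Type*} (P : Set (ACClause At)) : Prop :=
  ∀ r ∈ P, MonoClause r ∧ FinClause r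

/-- A Horn ℱ-program: monotone, finite atom sets, no negation. -/
def Horn {At : Type*} (P : Set (ACClause At)) : Prop :=
  ∀ r ∈ P, r.neg = [] ∧ MonoClause r ∧ FinClause r

/-- A P-computation. -/
def IsComputation {At : Type*} (P : Set (ACClause At)) (t : ℕ → Set At) : Prop :=
  t 0 = ∅ ∧ ∀ n, t n ⊆ t (n + 1) ∧ t (n + 1) ∈ Tnd P (t n)

/-- M is a derivable model of P: the result of some P-computation. -/
def Derivable {At : Type*} (P : Set (ACClause At)) (M : Set At) : Prop :=
  ∃ t, IsComputation P t ∧ M = ⋃ n, t n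

def stripNeg {At : Type*} (r : ACClause At) : ACClause At :=
  { r with neg := [] }

/-- The reduct P^M. -/
def reduct {At : Type*} (P : Set (ACClause At)) (M : Set At) : Set (ACClause At) :=
  {r' | ∃ r ∈ P, (∀ A ∈ r.neg, ¬ satAtom M A) ∧ r' = stripNeg r}

/-- M is a stable model of P: M is a derivable model of the reduct P^M. -/
def Stable {At : Type*} (P : Set (ACClause At)) (M : Set At) : Prop :=
  Derivable (reduct P M) M

/-- The canonical P-computation with respect to M. -/
def canon {At : Type*} (P : Set (ACClause At)) (M : Set At) : ℕ → Set At
  | 0 => ∅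
  | n + 1 => hsetP P (canon P M n) ∩ M

/-- A definite head: the head set is a minimal element of the head constraint. -/
def DefHead {At : Type*} (r : ACClause At) : Prop :=
  r.hset ∈ r.hdC ∧ ∀ Y ∈ r.hdC, Y ⊆ r.hset → Y = r.hset


lemma satBody_mono' {At : Type*} {r : ACClause At} (hneg : r.neg = []) (hmono : MonoClause r)
    {M M' : Set At} (h : M ⊆ M') (hb : satBody M r) : satBody M' r := by
  constructor
  · intro A hA
    exact hmono.2.1 A hA _ _ (hb.1 A hA) (Set.inter_subset_inter_left _ h)
  · intro A hA; rw [hneg] at hA; simp at hA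

lemma appl_mono' {At : Type*} {P : Set (ACClause At)} (hP : Horn P)
    {M M' : Set At} (h : M ⊆ M') : appl P M ⊆ appl P M' := by
  intro r hr
  exact ⟨hr.1, satBody_mono' (hP r hr.1).1 (hP r hr.1).2.1 h hr.2⟩

lemma hsetP_mono' {At : Type*} {P : Set (ACClause At)} (hP : Horn P)
    {M M' : Set At} (h : M ⊆ M') : hsetP P M ⊆ hsetP P M' := by
  intro x hx
  simp only [hsetP, Set.mem_iUnion] at hx ⊢
  obtain ⟨r, hr, hx⟩ := hx
  exact ⟨r, appl_mono' hP h hr, hx⟩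

lemma canon_univ_succ {At : Type*} (P : Set (ACClause At)) (n : ℕ) :
    canon P (Set.univ : Set At) (n + 1) = hsetP P (canon P Set.univ n) := by
  simp [canon]

lemma canon_univ_mono {At : Type*} {P : Set (ACClause At)} (hP : Horn P) (n : ℕ) :
    canon P (Set.univ : Set At) n ⊆ canon P Set.univ (n + 1) := by
  induction n with
  | zero => simp [canon]
  | succ n ih =>
    rw [canon_univ_succ, canon_univ_succ]
    exact hsetP_mono' hP ih

theorem stmt10 {At : Type*} (P : Set (ACClause At)) (hP : Horn P)
    (hcons : ∀ r ∈ P, ConsHead r) :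
    Derivable P (⋃ n, canon P (Set.univ : Set At) n) ∧
      ∀ M : Set At, Derivable P M → M ⊆ ⋃ n, canon P (Set.univ : Set At) n := by
  have hcomp : IsComputation P (canon P (Set.univ : Set At)) := by
    refine ⟨rfl, fun n => ⟨canon_univ_mono hP n, ?_, ?_⟩⟩
    · rw [canon_univ_succ]
    · intro r hr
      have hrP := hr.1
      obtain ⟨N, hN⟩ := hcons r hrP
      have hmono := (hP r hrP).2.1.1
      have hsub : r.hset ⊆ hsetP P (canon P Set.univ n) := by
        intro x hx
        simp only [hsetP, Set.mem_iUnion]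
        exact ⟨r, hr, hx⟩
      have : N ∩ r.hset ⊆ canon P Set.univ (n + 1) ∩ r.hset := by
        rw [canon_univ_succ]
        intro x hx
        exact ⟨hsub hx.2, hx.2⟩
      exact hmono _ _ hN this
  refine ⟨⟨_, hcomp, rfl⟩, ?_⟩
  rintro M ⟨t, ht, rfl⟩
  have key : ∀ n, t n ⊆ canon P (Set.univ : Set At) n := by
    intro n
    induction n with
    | zero => rw [ht.1]; exact subset_rfl
    | succ n ih =>
      have h1 : t (n + 1) ⊆ hsetP P (t n) := (ht.2 n).2.1
      rw [canon_univ_succ]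
      exact h1.trans (hsetP_mono' hP ih)
  exact Set.iUnion_mono key
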